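/- Let a < 0, T > 0, k₋ = √(-a/2), and A_T < k₋. Define A(t) = -k₋ · ((A_T - k₋)·exp(4k₋(T - t)) + (A_T + k₋)) / ((A_T - k₋)·exp(4k₋(T - t)) - (A_T + k₋)). Then the denominator (A_T - k₋)·exp(4k₋(T - t)) - (A_T + k₋) is nonzero for every t ≤ T, A satisfies A'(t) = -a - 2·A(t)² for every t ≤ T, and A(T) = A_T. In particular the terminal value problem for the Riccati equation has a solution on [0, T] for every T > 0. -/

import Mathlib

/-- For `a < 0`, `T > 0`, `k₋ = √(-a/2)` and terminal data `A_T < k₋`, the explicit formula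
`A(t) = -k₋ ((A_T - k₋) e^{4k₋(T-t)} + (A_T + k₋)) / ((A_T - k₋) e^{4k₋(T-t)} - (A_T + k₋))`
has nonvanishing denominator for all `t ≤ T`, solves the Riccati equation
`A' = -a - 2A²` for all `t ≤ T`, and satisfies the terminal condition `A(T) = A_T`.
In particular the terminal value problem is solvable on `[0, T]` for every `T > 0`. -/
theorem riccati_explicit_solution_a_neg
    (a T A_T k : ℝ) (ha : a < 0) (hT : 0 < T)
    (hk : k = Real.sqrt (-a / 2)) (hAT : A_T < k)
    (A : ℝ → ℝ)
    (hA : ∀ t : ℝ, A t =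
      -k * ((A_T - k) * Real.exp (4 * k * (T - t)) + (A_T + k)) /
        ((A_T - k) * Real.exp (4 * k * (T - t)) - (A_T + k))) :
    (∀ t ≤ T, (A_T - k) * Real.exp (4 * k * (T - t)) - (A_T + k) ≠ 0) ∧
    (∀ t ≤ T, HasDerivAt A (-a - 2 * (A t) ^ 2) t) ∧
    A T = A_T := by
  have hk0 : 0 < k := hk ▸ Real.sqrt_pos.2 (by linarith)
  have hk2 : k ^ 2 = -a / 2 := by
    rw [hk, sq, Real.mul_self_sqrt (by linarith)]
  have hden : ∀ t ≤ T, (A_T - k) * Real.exp (4 * k * (T - t)) - (A_T + k) < 0 := by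
    intro t ht
    have hE : (1:ℝ) ≤ Real.exp (4 * k * (T - t)) := Real.one_le_exp (by nlinarith)
    nlinarith [hE, hAT]
  refine ⟨fun t ht => ne_of_lt (hden t ht), ?_, ?_⟩
  · intro t ht
    have hD := hden t ht
    have hDne := ne_of_lt hD
    have hE0 : 0 < Real.exp (4 * k * (T - t)) := Real.exp_pos _
    have hE : HasDerivAt (fun t => Real.exp (4 * k * (T - t)))
        (Real.exp (4 * k * (T - t)) * (-(4*k))) t := by
      have h1 : HasDerivAt (fun t : ℝ => 4 * k * (T - t)) (-(4*k)) t := by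
        have := ((hasDerivAt_const t T).sub (hasDerivAt_id t)).const_mul (4*k)
        simpa using this
      exact (Real.hasDerivAt_exp _).comp t h1
    have hN : HasDerivAt (fun t => -k * ((A_T - k) * Real.exp (4 * k * (T - t)) + (A_T + k)))
        (-k * ((A_T - k) * (Real.exp (4 * k * (T - t)) * (-(4*k))))) t := by
      exact ((hE.const_mul (A_T - k)).add_const (A_T + k)).const_mul (-k)
    have hDd : HasDerivAt (fun t => (A_T - k) * Real.exp (4 * k * (T - t)) - (A_T + k))
        ((A_T - k) * (Real.exp (4 * k * (T - t)) * (-(4*k)))) t :=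
      (hE.const_mul (A_T - k)).sub_const (A_T + k)
    have hf := hN.div hDd hDne
    have hAf : A = fun t => -k * ((A_T - k) * Real.exp (4 * k * (T - t)) + (A_T + k)) /
        ((A_T - k) * Real.exp (4 * k * (T - t)) - (A_T + k)) := funext hA
    rw [hAf]
    convert hf using 1
    case e'_4 => rfl
    case e'_5 => rfl
    case e'_8 => rfl
    have haa : -a = 2 * k ^ 2 := by linarith
    rw [haa]
    beta_reduce
    rw [div_pow, eq_div_iff (pow_ne_zero 2 hDne), sub_mul, mul_assoc 2 (_ / _),
      div_mul_cancel₀ _ (pow_ne_zero 2 hDne)]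
    ring
  · rw [hA T]
    simp only [sub_self, mul_zero, Real.exp_zero, mul_one]
    rw [show A_T - k - (A_T + k) = -(2*k) by ring]
    rw [div_eq_iff (by simp [hk0.ne'] : -(2*k) ≠ 0)]
    ring
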